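/- Let x and y be points with E[N(x)²] < ∞ and E[N(y)²] < ∞. Define the centered fields ψ(x) = h(x)² − E[h(x)²] (normal-ordered square of the height) and φ(x) = N(x) − E[N(x)] (nesting field), and similarly for y. Then E[ψ(x)ψ(y)] = E[φ(x)φ(y)] + E[ 2·N(x,y)² − 2·N(x,y) ]. -/

import Mathlib

set_option linter.unusedSectionVars false
set_option maxHeartbeats 1000000

open MeasureTheory ProbabilityTheory

/-- The finite sets of loops (`Finset Γ`) carry the discrete (`⊤`) sigma-algebra. -/
instance (priority := low) loopSigmaAlgebra (Γ : Type*) : MeasurableSpace (Finset Γ) := ⊤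

lemma loopMS_all {Γ : Type*} [Countable Γ] (t : Set (Finset Γ)) : MeasurableSet t :=
  t.to_countable.measurableSet

section Aux
variable {Ω : Type*} [MeasurableSpace Ω] {μ : Measure Ω} [IsProbabilityMeasure μ]

lemma measurable_comp_countable' {κ : Type*} [Countable κ] {T : Ω → κ}
    (hT : ∀ v : κ, MeasurableSet (T ⁻¹' {v})) {F : κ → Ω → ℝ}
    (hF : ∀ v, Measurable (F v)) : Measurable fun ω => F (T ω) ω := by
  intro U hU
  have h : (fun ω => F (T ω) ω) ⁻¹' U = ⋃ v, (T ⁻¹' {v}) ∩ (F v ⁻¹' U) := by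
    ext ω
    simp only [Set.mem_preimage, Set.mem_iUnion, Set.mem_inter_iff, Set.mem_singleton_iff]
    exact ⟨fun h => ⟨T ω, rfl, h⟩, by rintro ⟨v, rfl, h⟩; exact h⟩
  rw [h]
  exact MeasurableSet.iUnion fun v => (hT v).inter (hF v hU)

lemma partition_integral' {κ : Type*} [Countable κ] {T : Ω → κ}
    (hT : ∀ v : κ, MeasurableSet (T ⁻¹' {v}))
    {f : Ω → ℝ} (hfm : AEStronglyMeasurable f μ) (hf0 : 0 ≤ᵐ[μ] f)
    {g : κ → ℝ} (hg0 : ∀ v, 0 ≤ g v) (hgint : Integrable (fun ω => g (T ω)) μ)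
    (hpiece : ∀ v : κ, IntegrableOn f (T ⁻¹' {v}) μ ∧
      ∫ ω in T ⁻¹' {v}, f ω ∂μ = g v * (μ (T ⁻¹' {v})).toReal) :
    Integrable f μ ∧ ∫ ω, f ω ∂μ = ∫ ω, g (T ω) ∂μ := by
  set E : κ → Set Ω := fun v => T ⁻¹' {v} with hE
  have hdisj : Pairwise (Function.onFun Disjoint E) := by
    intro v w hvw
    refine Set.disjoint_left.mpr fun ω h1 h2 => hvw ?_
    have : T ω = v := h1
    have h2' : T ω = w := h2
    rw [← this, h2']
  have hunion : ⋃ v, E v = Set.univ := by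
    ext ω; simp only [Set.mem_iUnion, Set.mem_univ, iff_true]
    exact ⟨T ω, rfl⟩
  have hg0' : 0 ≤ᵐ[μ] fun ω => g (T ω) := Filter.Eventually.of_forall fun ω => hg0 (T ω)
  have hlf : ∫⁻ ω, ENNReal.ofReal (f ω) ∂μ = ∑' v, ∫⁻ ω in E v, ENNReal.ofReal (f ω) ∂μ := by
    conv_lhs => rw [← setLIntegral_univ, ← hunion]
    exact lintegral_iUnion (fun v => hT v) hdisj _
  have hlg : ∫⁻ ω, ENNReal.ofReal (g (T ω)) ∂μ
      = ∑' v, ∫⁻ ω in E v, ENNReal.ofReal (g (T ω)) ∂μ := by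
    conv_lhs => rw [← setLIntegral_univ, ← hunion]
    exact lintegral_iUnion (fun v => hT v) hdisj _
  have hpf : ∀ v, ∫⁻ ω in E v, ENNReal.ofReal (f ω) ∂μ = ENNReal.ofReal (g v) * μ (E v) := by
    intro v
    obtain ⟨hint, heq⟩ := hpiece v
    rw [← ofReal_integral_eq_lintegral_ofReal hint (ae_restrict_of_ae hf0), heq,
      ENNReal.ofReal_mul (hg0 v), ENNReal.ofReal_toReal (measure_ne_top μ _)]
  have hpg : ∀ v, ∫⁻ ω in E v, ENNReal.ofReal (g (T ω)) ∂μ = ENNReal.ofReal (g v) * μ (E v) := by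
    intro v
    have hcg : ∀ ω ∈ E v, ENNReal.ofReal (g (T ω)) = ENNReal.ofReal (g v) := by
      intro ω h; have : T ω = v := h; rw [this]
    rw [setLIntegral_congr_fun (hT v) hcg, setLIntegral_const]
  have htot : ∫⁻ ω, ENNReal.ofReal (f ω) ∂μ = ∫⁻ ω, ENNReal.ofReal (g (T ω)) ∂μ := by
    rw [hlf, hlg]
    exact tsum_congr fun v => (hpf v).trans (hpg v).symm
  have hglt : ∫⁻ ω, ENNReal.ofReal (g (T ω)) ∂μ < ⊤ := by
    rw [← ofReal_integral_eq_lintegral_ofReal hgint hg0']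
    exact ENNReal.ofReal_lt_top
  have hfint : Integrable f μ := by
    refine ⟨hfm, ?_⟩
    have : ∫⁻ ω, ‖f ω‖ₑ ∂μ = ∫⁻ ω, ENNReal.ofReal (f ω) ∂μ := by
      refine lintegral_congr_ae ?_
      filter_upwards [hf0] with ω h
      rw [← ofReal_norm, Real.norm_eq_abs, abs_of_nonneg h]
    rw [HasFiniteIntegral, this, htot]
    exact hglt
  refine ⟨hfint, ?_⟩
  rw [integral_eq_lintegral_of_nonneg_ae hf0 hfm,
    integral_eq_lintegral_of_nonneg_ae hg0' hgint.1, htot]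

end Aux

section Signs
variable {Ω : Type*} [MeasurableSpace Ω] {μ : Measure Ω} [IsProbabilityMeasure μ]
  {Γ : Type*} [Countable Γ] [DecidableEq Γ] {s : Γ → Ω → ℝ}

lemma signs_ae (hsmeas : ∀ γ : Γ, Measurable (s γ))
    (hsign : ∀ γ : Γ, μ {ω | s γ ω = 1} = 1/2 ∧ μ {ω | s γ ω = -1} = 1/2) :
    ∀ᵐ ω ∂μ, ∀ γ : Γ, s γ ω = 1 ∨ s γ ω = -1 := by
  rw [ae_all_iff]
  intro γ
  have hP : MeasurableSet {ω | s γ ω = 1} := (hsmeas γ) (measurableSet_singleton 1)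
  have hN : MeasurableSet {ω | s γ ω = -1} := (hsmeas γ) (measurableSet_singleton (-1))
  have hd : Disjoint {ω | s γ ω = 1} {ω | s γ ω = -1} := by
    refine Set.disjoint_left.mpr fun ω h1 h2 => ?_
    simp only [Set.mem_setOf_eq] at h1 h2
    rw [h1] at h2; norm_num at h2
  have hu : μ ({ω | s γ ω = 1} ∪ {ω | s γ ω = -1}) = 1 := by
    rw [measure_union hd hN, (hsign γ).1, (hsign γ).2]
    norm_num
    exact ENNReal.inv_two_add_inv_two
  have hc : μ ({ω | s γ ω = 1} ∪ {ω | s γ ω = -1})ᶜ = 0 := by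
    rw [measure_compl (hP.union hN) (measure_ne_top μ _), hu, measure_univ]
    simp
  rw [ae_iff, show {ω | ¬(s γ ω = 1 ∨ s γ ω = -1)} = ({ω | s γ ω = 1} ∪ {ω | s γ ω = -1})ᶜ
    from by ext ω; simp [not_or]]
  exact hc

lemma integral_sign (hsmeas : ∀ γ : Γ, Measurable (s γ))
    (hsign : ∀ γ : Γ, μ {ω | s γ ω = 1} = 1/2 ∧ μ {ω | s γ ω = -1} = 1/2) (γ : Γ) :
    ∫ ω, s γ ω ∂μ = 0 := by
  have hP : MeasurableSet {ω | s γ ω = 1} := (hsmeas γ) (measurableSet_singleton 1)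
  have hN : MeasurableSet {ω | s γ ω = -1} := (hsmeas γ) (measurableSet_singleton (-1))
  have hae := signs_ae hsmeas hsign
  have heq : s γ =ᵐ[μ] fun ω =>
      Set.indicator {ω | s γ ω = 1} (fun _ => (1:ℝ)) ω
        + Set.indicator {ω | s γ ω = -1} (fun _ => (-1:ℝ)) ω := by
    filter_upwards [hae] with ω h
    rcases h γ with h1 | h1 <;> simp [Set.indicator_apply, Set.mem_setOf_eq, h1] <;> norm_num
  rw [integral_congr_ae heq, integral_add, integral_indicator_const _ hP,
    integral_indicator_const _ hN, measureReal_def, measureReal_def, (hsign γ).1, (hsign γ).2]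
  · norm_num
  · exact (integrable_const (1:ℝ)).indicator hP
  · exact (integrable_const (-1:ℝ)).indicator hN

end Signs

section Signs
variable {Ω : Type*} [MeasurableSpace Ω] {μ : Measure Ω} [IsProbabilityMeasure μ]
  {Γ : Type*} [Countable Γ] [DecidableEq Γ] {s : Γ → Ω → ℝ}

lemma integrable_of_ae_bound {f : Ω → ℝ} (hm : AEStronglyMeasurable f μ) {C : ℝ}
    (h : ∀ᵐ ω ∂μ, |f ω| ≤ C) : Integrable f μ :=
  Integrable.mono' (integrable_const C) hm (by filter_upwards [h] with ω hω; rwa [Real.norm_eq_abs])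

variable (hsmeas : ∀ γ : Γ, Measurable (s γ))
  (hsae : ∀ᵐ ω ∂μ, ∀ γ : Γ, s γ ω = 1 ∨ s γ ω = -1)

include hsmeas hsae

lemma integrable_sign (γ : Γ) : Integrable (s γ) μ := by
  refine integrable_of_ae_bound (hsmeas γ).aestronglyMeasurable (C := 1) ?_
  filter_upwards [hsae] with ω h
  rcases h γ with h1 | h1 <;> rw [h1] <;> norm_num

lemma integrable_sign_mul (a b : Γ) : Integrable (fun ω => s a ω * s b ω) μ := by
  refine integrable_of_ae_bound ((hsmeas a).mul (hsmeas b)).aestronglyMeasurable (C := 1) ?_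
  filter_upwards [hsae] with ω h
  rcases h a with h1 | h1 <;> rcases h b with h2 | h2 <;> rw [h1, h2] <;> norm_num

lemma integrable_sign_prod (t : Finset Γ) : Integrable (∏ j ∈ t, s j) μ := by
  refine integrable_of_ae_bound ?_ (C := 1) ?_
  · have : Measurable (∏ j ∈ t, s j) := by
      simpa [Finset.prod_fn] using Finset.measurable_prod t fun j _ => hsmeas j
    exact this.aestronglyMeasurable
  · filter_upwards [hsae] with ω h
    rw [Finset.prod_apply, Finset.abs_prod]
    refine Finset.prod_le_one (fun j _ => abs_nonneg _) fun j _ => ?_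
    rcases h j with h1 | h1 <;> rw [h1] <;> norm_num

variable (hsign0 : ∀ γ : Γ, ∫ ω, s γ ω ∂μ = 0)
  (hsindep : iIndepFun (m := fun _ : Γ => (inferInstance : MeasurableSpace ℝ)) s μ)

include hsign0 hsindep

lemma integral_sign_pair (a b : Γ) :
    ∫ ω, s a ω * s b ω ∂μ = if a = b then 1 else 0 := by
  by_cases hab : a = b
  · subst hab
    rw [if_pos rfl]
    have : (fun ω => s a ω * s a ω) =ᵐ[μ] fun _ => (1 : ℝ) := by
      filter_upwards [hsae] with ω h
      rcases h a with h1 | h1 <;> rw [h1] <;> norm_num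
    rw [integral_congr_ae this]; simp
  · rw [if_neg hab]
    have h := (hsindep.indepFun hab).integral_mul_eq_mul_integral
      (integrable_sign hsmeas hsae a).1 (integrable_sign hsmeas hsae b).1
    have h' : ∫ ω, s a ω * s b ω ∂μ = (∫ ω, s a ω ∂μ) * ∫ ω, s b ω ∂μ := h
    rw [h', hsign0 a, zero_mul]

lemma integral_quad_distinct {a b c d : Γ} (hab : a ≠ b) (hac : a ≠ c) (had : a ≠ d)
    (hbc : b ≠ c) (hbd : b ≠ d) (hcd : c ≠ d) :
    ∫ ω, s a ω * s b ω * s c ω * s d ω ∂μ = 0 := by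
  have hmem : a ∉ ({b, c, d} : Finset Γ) := by simp [hab, hac, had]
  have hindep := hsindep.indepFun_finset_prod_of_notMem hsmeas hmem
  have hint : Integrable (∏ j ∈ ({b, c, d} : Finset Γ), s j) μ :=
    integrable_sign_prod hsmeas hsae _
  have h := hindep.integral_mul_eq_mul_integral hint.1 (integrable_sign hsmeas hsae a).1
  have hprod : ∀ ω, (∏ j ∈ ({b, c, d} : Finset Γ), s j) ω = s b ω * s c ω * s d ω := by
    intro ω
    rw [Finset.prod_apply]
    rw [Finset.prod_insert (by simp [hbc, hbd]), Finset.prod_insert (by simp [hcd]),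
      Finset.prod_singleton]
    ring
  have h' : ∫ ω, s a ω * s b ω * s c ω * s d ω ∂μ
      = (∫ ω, (∏ j ∈ ({b, c, d} : Finset Γ), s j) ω ∂μ) * ∫ ω, s a ω ∂μ := by
    rw [← h]
    refine integral_congr_ae (Filter.Eventually.of_forall fun ω => ?_)
    simp only [Pi.mul_apply, hprod]
    ring
  rw [h', hsign0 a, mul_zero]

end Signs

section Quad
variable {Ω : Type*} [MeasurableSpace Ω] {μ : Measure Ω} [IsProbabilityMeasure μ]
  {Γ : Type*} [Countable Γ] [DecidableEq Γ] {s : Γ → Ω → ℝ}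

lemma integral_sign_quad (hsmeas : ∀ γ : Γ, Measurable (s γ))
    (hsae : ∀ᵐ ω ∂μ, ∀ γ : Γ, s γ ω = 1 ∨ s γ ω = -1)
    (hsign0 : ∀ γ : Γ, ∫ ω, s γ ω ∂μ = 0)
    (hsindep : iIndepFun (m := fun _ : Γ => (inferInstance : MeasurableSpace ℝ)) s μ)
    (a b c d : Γ) :
    ∫ ω, s a ω * s b ω * s c ω * s d ω ∂μ =
      (if a = b then (1:ℝ) else 0) * (if c = d then 1 else 0)
      + (if a = c then (1:ℝ) else 0) * (if b = d then 1 else 0)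
      + (if a = d then (1:ℝ) else 0) * (if b = c then 1 else 0)
      - (if a = b ∧ a = c ∧ a = d then 2 else 0) := by
  have pair := integral_sign_pair hsmeas hsae hsign0 hsindep
  by_cases hab : a = b
  · subst hab
    by_cases hac : a = c
    · subst hac
      by_cases had : a = d
      · subst had
        have he : (fun ω => s a ω * s a ω * s a ω * s a ω) =ᵐ[μ] fun _ => (1:ℝ) := by
          filter_upwards [hsae] with ω h; rcases h a with h1|h1 <;> rw [h1] <;> norm_num
        rw [integral_congr_ae he]; simp; norm_num
      · have he : (fun ω => s a ω * s a ω * s a ω * s d ω) =ᵐ[μ] fun ω => s a ω * s d ω := by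
          filter_upwards [hsae] with ω h; rcases h a with h1|h1 <;> rw [h1] <;> ring
        rw [integral_congr_ae he, pair a d]; simp [had, Ne.symm had]
    · by_cases had : a = d
      · subst had
        have he : (fun ω => s a ω * s a ω * s c ω * s a ω) =ᵐ[μ] fun ω => s a ω * s c ω := by
          filter_upwards [hsae] with ω h; rcases h a with h1|h1 <;> rw [h1] <;> ring
        rw [integral_congr_ae he, pair a c]; simp [hac, Ne.symm hac]
      · by_cases hcd : c = d
        · subst hcd
          have he : (fun ω => s a ω * s a ω * s c ω * s c ω) =ᵐ[μ] fun _ => (1:ℝ) := by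
            filter_upwards [hsae] with ω h
            rcases h a with h1|h1 <;> rcases h c with h2|h2 <;> rw [h1, h2] <;> norm_num
          rw [integral_congr_ae he]; simp [hac, had, Ne.symm hac, Ne.symm had]
        · have he : (fun ω => s a ω * s a ω * s c ω * s d ω) =ᵐ[μ] fun ω => s c ω * s d ω := by
            filter_upwards [hsae] with ω h; rcases h a with h1|h1 <;> rw [h1] <;> ring
          rw [integral_congr_ae he, pair c d]; simp [hac, had, hcd, Ne.symm hac, Ne.symm had, Ne.symm hcd]
  · by_cases hac : a = c
    · subst hac
      by_cases hbd : b = d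
      · subst hbd
        have he : (fun ω => s a ω * s b ω * s a ω * s b ω) =ᵐ[μ] fun _ => (1:ℝ) := by
          filter_upwards [hsae] with ω h
          rcases h a with h1|h1 <;> rcases h b with h2|h2 <;> rw [h1, h2] <;> norm_num
        rw [integral_congr_ae he]; simp [hab, Ne.symm hab]
      · by_cases had : a = d
        · subst had
          have he : (fun ω => s a ω * s b ω * s a ω * s a ω) =ᵐ[μ] fun ω => s a ω * s b ω := by
            filter_upwards [hsae] with ω h; rcases h a with h1|h1 <;> rw [h1] <;> ring
          rw [integral_congr_ae he, pair a b]; simp [hab, hbd, Ne.symm hab, Ne.symm hbd]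
        · have he : (fun ω => s a ω * s b ω * s a ω * s d ω) =ᵐ[μ] fun ω => s b ω * s d ω := by
            filter_upwards [hsae] with ω h; rcases h a with h1|h1 <;> rw [h1] <;> ring
          rw [integral_congr_ae he, pair b d]; simp [hab, hbd, had, Ne.symm hab, Ne.symm hbd, Ne.symm had]
    · by_cases had : a = d
      · subst had
        by_cases hbc : b = c
        · subst hbc
          have he : (fun ω => s a ω * s b ω * s b ω * s a ω) =ᵐ[μ] fun _ => (1:ℝ) := by
            filter_upwards [hsae] with ω h
            rcases h a with h1|h1 <;> rcases h b with h2|h2 <;> rw [h1, h2] <;> norm_num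
          rw [integral_congr_ae he]; simp [hab, hac, Ne.symm hab, Ne.symm hac]
        · have he : (fun ω => s a ω * s b ω * s c ω * s a ω) =ᵐ[μ] fun ω => s b ω * s c ω := by
            filter_upwards [hsae] with ω h; rcases h a with h1|h1 <;> rw [h1] <;> ring
          rw [integral_congr_ae he, pair b c]; simp [hab, hac, hbc, Ne.symm hab, Ne.symm hac, Ne.symm hbc]
      · by_cases hbc : b = c
        · subst hbc
          have he : (fun ω => s a ω * s b ω * s b ω * s d ω) =ᵐ[μ] fun ω => s a ω * s d ω := by
            filter_upwards [hsae] with ω h; rcases h b with h1|h1 <;> rw [h1] <;> ring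
          rw [integral_congr_ae he, pair a d]; simp [hab, hac, had, Ne.symm hab, Ne.symm hac, Ne.symm had]
        · by_cases hbd : b = d
          · subst hbd
            have he : (fun ω => s a ω * s b ω * s c ω * s b ω) =ᵐ[μ] fun ω => s a ω * s c ω := by
              filter_upwards [hsae] with ω h; rcases h b with h1|h1 <;> rw [h1] <;> ring
            rw [integral_congr_ae he, pair a c]; simp [hab, hac, had, hbc, Ne.symm hab, Ne.symm hac, Ne.symm had, Ne.symm hbc]
          · by_cases hcd : c = d
            · subst hcd
              have he : (fun ω => s a ω * s b ω * s c ω * s c ω) =ᵐ[μ]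
                  fun ω => s a ω * s b ω := by
                filter_upwards [hsae] with ω h; rcases h c with h1|h1 <;> rw [h1] <;> ring
              rw [integral_congr_ae he, pair a b]; simp [hab, hac, had, hbc, hbd, Ne.symm hab, Ne.symm hac, Ne.symm had, Ne.symm hbc, Ne.symm hbd]
            · rw [integral_quad_distinct hsmeas hsae hsign0 hsindep hab hac had hbc hbd hcd]
              simp [hab, hac, had, hbc, hbd, hcd, Ne.symm hab, Ne.symm hac, Ne.symm had, Ne.symm hbc, Ne.symm hbd, Ne.symm hcd]
end Quad

lemma sum_quad_comb {Γ : Type*} [DecidableEq Γ] (A B : Finset Γ) :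
    ∑ a ∈ A, ∑ b ∈ A, ∑ c ∈ B, ∑ d ∈ B,
      ((if a = b then (1:ℝ) else 0) * (if c = d then 1 else 0)
      + (if a = c then (1:ℝ) else 0) * (if b = d then 1 else 0)
      + (if a = d then (1:ℝ) else 0) * (if b = c then 1 else 0)
      - (if a = b ∧ a = c ∧ a = d then 2 else 0))
    = (A.card : ℝ) * B.card + 2 * ((A ∩ B).card : ℝ) ^ 2 - 2 * ((A ∩ B).card : ℝ) := by
  have S1 : ∀ (C : Finset Γ), ∑ a ∈ C, ∑ b ∈ C, (if a = b then (1:ℝ) else 0) = C.card := by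
    intro C
    have h : ∀ a ∈ C, ∑ b ∈ C, (if a = b then (1:ℝ) else 0) = 1 := by
      intro a ha; rw [Finset.sum_ite_eq C a (fun _ => (1:ℝ)), if_pos ha]
    rw [Finset.sum_congr rfl h]; simp
  have SB : ∑ a ∈ A, (if a ∈ B then (1:ℝ) else 0) = ((A ∩ B).card : ℝ) := by
    rw [Finset.sum_ite_mem A B (fun _ => (1:ℝ))]; simp
  have hT1 : ∑ a ∈ A, ∑ b ∈ A, ∑ c ∈ B, ∑ d ∈ B,
      (if a = b then (1:ℝ) else 0) * (if c = d then 1 else 0)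
      = (A.card : ℝ) * B.card := by
    have h : ∀ a ∈ A, ∀ b ∈ A, ∑ c ∈ B, ∑ d ∈ B,
        (if a = b then (1:ℝ) else 0) * (if c = d then 1 else 0)
        = (if a = b then (1:ℝ) else 0) * B.card := by
      intro a _ b _
      simp only [← Finset.mul_sum]
      rw [S1 B]
    calc ∑ a ∈ A, ∑ b ∈ A, ∑ c ∈ B, ∑ d ∈ B,
        (if a = b then (1:ℝ) else 0) * (if c = d then 1 else 0)
        = ∑ a ∈ A, ∑ b ∈ A, (if a = b then (1:ℝ) else 0) * B.card := by
          refine Finset.sum_congr rfl fun a ha => Finset.sum_congr rfl fun b hb => h a ha b hb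
      _ = (∑ a ∈ A, ∑ b ∈ A, (if a = b then (1:ℝ) else 0)) * B.card := by
          simp only [← Finset.sum_mul]
      _ = (A.card : ℝ) * B.card := by rw [S1 A]
  have hT2 : ∑ a ∈ A, ∑ b ∈ A, ∑ c ∈ B, ∑ d ∈ B,
      (if a = c then (1:ℝ) else 0) * (if b = d then 1 else 0)
      = ((A ∩ B).card : ℝ) ^ 2 := by
    have h : ∀ a b : Γ, ∑ c ∈ B, ∑ d ∈ B, (if a = c then (1:ℝ) else 0) * (if b = d then 1 else 0)
        = (if a ∈ B then (1:ℝ) else 0) * (if b ∈ B then 1 else 0) := by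
      intro a b
      rw [← Finset.sum_mul_sum, Finset.sum_ite_eq B a (fun _ => (1:ℝ)),
        Finset.sum_ite_eq B b (fun _ => (1:ℝ))]
    calc ∑ a ∈ A, ∑ b ∈ A, ∑ c ∈ B, ∑ d ∈ B,
        (if a = c then (1:ℝ) else 0) * (if b = d then 1 else 0)
        = ∑ a ∈ A, ∑ b ∈ A, (if a ∈ B then (1:ℝ) else 0) * (if b ∈ B then 1 else 0) := by
          exact Finset.sum_congr rfl fun a _ => Finset.sum_congr rfl fun b _ => h a b
      _ = (∑ a ∈ A, (if a ∈ B then (1:ℝ) else 0)) * (∑ b ∈ A, (if b ∈ B then (1:ℝ) else 0)) := by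
          rw [Finset.sum_mul_sum]
      _ = ((A ∩ B).card : ℝ) ^ 2 := by rw [SB]; ring
  have hT3 : ∑ a ∈ A, ∑ b ∈ A, ∑ c ∈ B, ∑ d ∈ B,
      (if a = d then (1:ℝ) else 0) * (if b = c then 1 else 0)
      = ((A ∩ B).card : ℝ) ^ 2 := by
    have h : ∀ a b : Γ, ∑ c ∈ B, ∑ d ∈ B, (if a = d then (1:ℝ) else 0) * (if b = c then 1 else 0)
        = (if a ∈ B then (1:ℝ) else 0) * (if b ∈ B then 1 else 0) := by
      intro a b
      rw [Finset.sum_comm]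
      rw [← Finset.sum_mul_sum, Finset.sum_ite_eq B a (fun _ => (1:ℝ)),
        Finset.sum_ite_eq B b (fun _ => (1:ℝ))]
    calc ∑ a ∈ A, ∑ b ∈ A, ∑ c ∈ B, ∑ d ∈ B,
        (if a = d then (1:ℝ) else 0) * (if b = c then 1 else 0)
        = ∑ a ∈ A, ∑ b ∈ A, (if a ∈ B then (1:ℝ) else 0) * (if b ∈ B then 1 else 0) := by
          exact Finset.sum_congr rfl fun a _ => Finset.sum_congr rfl fun b _ => h a b
      _ = (∑ a ∈ A, (if a ∈ B then (1:ℝ) else 0)) * (∑ b ∈ A, (if b ∈ B then (1:ℝ) else 0)) := by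
          rw [Finset.sum_mul_sum]
      _ = ((A ∩ B).card : ℝ) ^ 2 := by rw [SB]; ring
  have hT4 : ∑ a ∈ A, ∑ b ∈ A, ∑ c ∈ B, ∑ d ∈ B,
      (if a = b ∧ a = c ∧ a = d then (2:ℝ) else 0)
      = 2 * ((A ∩ B).card : ℝ) := by
    have hfac : ∀ a b c d : Γ, (if a = b ∧ a = c ∧ a = d then (2:ℝ) else 0)
        = (if a = b then (1:ℝ) else 0) * ((if a = c then (1:ℝ) else 0) *
            (if a = d then (2:ℝ) else 0)) := by
      intro a b c d
      by_cases h1 : a = b <;> by_cases h2 : a = c <;> by_cases h3 : a = d <;>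
        simp_all
    have h : ∀ a ∈ A, ∑ b ∈ A, ∑ c ∈ B, ∑ d ∈ B,
        (if a = b ∧ a = c ∧ a = d then (2:ℝ) else 0) = (if a ∈ B then (2:ℝ) else 0) := by
      intro a ha
      simp only [hfac]
      rw [show ∑ b ∈ A, ∑ c ∈ B, ∑ d ∈ B, (if a = b then (1:ℝ) else 0) *
          ((if a = c then (1:ℝ) else 0) * (if a = d then (2:ℝ) else 0))
          = (∑ b ∈ A, (if a = b then (1:ℝ) else 0)) *
            ((∑ c ∈ B, (if a = c then (1:ℝ) else 0)) * (∑ d ∈ B, (if a = d then (2:ℝ) else 0)))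
        from by rw [Finset.sum_mul_sum, Finset.sum_mul_sum]; simp [Finset.mul_sum]]
      rw [Finset.sum_ite_eq A a (fun _ => (1:ℝ)), Finset.sum_ite_eq B a (fun _ => (1:ℝ)),
        Finset.sum_ite_eq B a (fun _ => (2:ℝ)), if_pos ha]
      by_cases hb : a ∈ B <;> simp [hb]
    rw [Finset.sum_congr rfl h, Finset.sum_ite_mem A B (fun _ => (2:ℝ))]
    simp [mul_comm]
  simp only [Finset.sum_add_distrib, Finset.sum_sub_distrib]
  rw [hT1, hT2, hT3, hT4]
  ring

section M
variable {Ω : Type*} [MeasurableSpace Ω] {μ : Measure Ω} [IsProbabilityMeasure μ]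
  {Γ : Type*} [Countable Γ] [DecidableEq Γ] {s : Γ → Ω → ℝ}

lemma expand_sq_mul_sq (A B : Finset Γ) (ω : Ω) :
    (∑ γ ∈ A, s γ ω) ^ 2 * (∑ γ ∈ B, s γ ω) ^ 2
      = ∑ a ∈ A, ∑ b ∈ A, ∑ c ∈ B, ∑ d ∈ B, s a ω * s b ω * s c ω * s d ω := by
  rw [pow_two, pow_two, Finset.sum_mul_sum, Finset.sum_mul_sum, Finset.sum_mul]
  refine Finset.sum_congr rfl fun a _ => ?_
  rw [Finset.sum_mul]
  refine Finset.sum_congr rfl fun b _ => ?_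
  rw [Finset.mul_sum]
  refine Finset.sum_congr rfl fun c _ => ?_
  rw [Finset.mul_sum]
  refine Finset.sum_congr rfl fun d _ => ?_
  ring

variable (hsmeas : ∀ γ : Γ, Measurable (s γ))
  (hsae : ∀ᵐ ω ∂μ, ∀ γ : Γ, s γ ω = 1 ∨ s γ ω = -1)
  (hsign0 : ∀ γ : Γ, ∫ ω, s γ ω ∂μ = 0)
  (hsindep : iIndepFun (m := fun _ : Γ => (inferInstance : MeasurableSpace ℝ)) s μ)

include hsmeas hsae

lemma integrable_sign_quad_prod (a b c d : Γ) :
    Integrable (fun ω => s a ω * s b ω * s c ω * s d ω) μ := by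
  refine integrable_of_ae_bound
    ((((hsmeas a).mul (hsmeas b)).mul (hsmeas c)).mul (hsmeas d)).aestronglyMeasurable
    (C := 1) ?_
  filter_upwards [hsae] with ω h
  rcases h a with h1|h1 <;> rcases h b with h2|h2 <;> rcases h c with h3|h3 <;>
    rcases h d with h4|h4 <;> rw [h1, h2, h3, h4] <;> norm_num

include hsign0 hsindep

lemma integral_sq_fixed (A : Finset Γ) :
    ∫ ω, (∑ γ ∈ A, s γ ω) ^ 2 ∂μ = A.card := by
  have expand : ∀ ω, (∑ γ ∈ A, s γ ω) ^ 2 = ∑ a ∈ A, ∑ b ∈ A, s a ω * s b ω := by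
    intro ω; rw [pow_two, Finset.sum_mul_sum]
  calc ∫ ω, (∑ γ ∈ A, s γ ω) ^ 2 ∂μ = ∫ ω, ∑ a ∈ A, ∑ b ∈ A, s a ω * s b ω ∂μ := by
        simp only [expand]
    _ = ∑ a ∈ A, ∫ ω, ∑ b ∈ A, s a ω * s b ω ∂μ := by
        refine integral_finset_sum A fun a _ => ?_
        exact integrable_finset_sum A fun b _ => integrable_sign_mul hsmeas hsae a b
    _ = ∑ a ∈ A, ∑ b ∈ A, ∫ ω, s a ω * s b ω ∂μ := by
        refine Finset.sum_congr rfl fun a _ => ?_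
        exact integral_finset_sum A fun b _ => integrable_sign_mul hsmeas hsae a b
    _ = ∑ a ∈ A, ∑ b ∈ A, (if a = b then (1:ℝ) else 0) := by
        refine Finset.sum_congr rfl fun a _ => Finset.sum_congr rfl fun b _ => ?_
        exact integral_sign_pair hsmeas hsae hsign0 hsindep a b
    _ = A.card := by
        have h : ∀ a ∈ A, ∑ b ∈ A, (if a = b then (1:ℝ) else 0) = 1 := by
          intro a ha; rw [Finset.sum_ite_eq A a (fun _ => (1:ℝ)), if_pos ha]
        rw [Finset.sum_congr rfl h]; simp

lemma integral_sq_mul_sq_fixed (A B : Finset Γ) :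
    ∫ ω, (∑ γ ∈ A, s γ ω) ^ 2 * (∑ γ ∈ B, s γ ω) ^ 2 ∂μ
      = (A.card : ℝ) * B.card + 2 * ((A ∩ B).card : ℝ) ^ 2 - 2 * ((A ∩ B).card : ℝ) := by
  have expand := expand_sq_mul_sq (s := s) A B
  calc ∫ ω, (∑ γ ∈ A, s γ ω) ^ 2 * (∑ γ ∈ B, s γ ω) ^ 2 ∂μ
      = ∫ ω, ∑ a ∈ A, ∑ b ∈ A, ∑ c ∈ B, ∑ d ∈ B, s a ω * s b ω * s c ω * s d ω ∂μ := by
        simp only [expand]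
    _ = ∑ a ∈ A, ∑ b ∈ A, ∑ c ∈ B, ∑ d ∈ B, ∫ ω, s a ω * s b ω * s c ω * s d ω ∂μ := by
        rw [integral_finset_sum A fun a _ => integrable_finset_sum A fun b _ =>
          integrable_finset_sum B fun c _ => integrable_finset_sum B fun d _ =>
            integrable_sign_quad_prod hsmeas hsae a b c d]
        refine Finset.sum_congr rfl fun a _ => ?_
        rw [integral_finset_sum A fun b _ => integrable_finset_sum B fun c _ =>
          integrable_finset_sum B fun d _ => integrable_sign_quad_prod hsmeas hsae a b c d]
        refine Finset.sum_congr rfl fun b _ => ?_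
        rw [integral_finset_sum B fun c _ => integrable_finset_sum B fun d _ =>
          integrable_sign_quad_prod hsmeas hsae a b c d]
        refine Finset.sum_congr rfl fun c _ => ?_
        rw [integral_finset_sum B fun d _ => integrable_sign_quad_prod hsmeas hsae a b c d]
    _ = ∑ a ∈ A, ∑ b ∈ A, ∑ c ∈ B, ∑ d ∈ B,
          ((if a = b then (1:ℝ) else 0) * (if c = d then 1 else 0)
          + (if a = c then (1:ℝ) else 0) * (if b = d then 1 else 0)
          + (if a = d then (1:ℝ) else 0) * (if b = c then 1 else 0)
          - (if a = b ∧ a = c ∧ a = d then 2 else 0)) := by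
        refine Finset.sum_congr rfl fun a _ => Finset.sum_congr rfl fun b _ =>
          Finset.sum_congr rfl fun c _ => Finset.sum_congr rfl fun d _ => ?_
        exact integral_sign_quad hsmeas hsae hsign0 hsindep a b c d
    _ = (A.card : ℝ) * B.card + 2 * ((A ∩ B).card : ℝ) ^ 2 - 2 * ((A ∩ B).card : ℝ) :=
        sum_quad_comb A B
end M

section Piece
variable {Ω : Type*} [MeasurableSpace Ω] {μ : Measure Ω} [IsProbabilityMeasure μ]
  {Γ : Type*} [Countable Γ] [DecidableEq Γ] {X : Type*}
  {S : X → Ω → Finset Γ} {s : Γ → Ω → ℝ}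

lemma piece_eval (hSmeas : ∀ x : X, Measurable (S x))
    (hSsindep : IndepFun (fun ω (x : X) => S x ω) (fun ω (γ : Γ) => s γ ω) μ)
    (x y : X) (A B : Finset Γ) (g : (Γ → ℝ) → ℝ) (hgm : Measurable g)
    (hgint : Integrable (fun ω => g (fun γ => s γ ω)) μ) :
    ∫ ω in {ω | S x ω = A ∧ S y ω = B}, g (fun γ => s γ ω) ∂μ
      = (μ {ω | S x ω = A ∧ S y ω = B}).toReal * ∫ ω, g (fun γ => s γ ω) ∂μ := by
  set E : Set Ω := {ω | S x ω = A ∧ S y ω = B} with hEdef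
  have hEmeas : MeasurableSet E := by
    have : E = (S x) ⁻¹' {A} ∩ (S y) ⁻¹' {B} := by
      ext ω; simp [hEdef, Set.mem_setOf_eq]
    rw [this]
    exact ((hSmeas x) (loopMS_all _)).inter ((hSmeas y) (loopMS_all _))
  set F : (X → Finset Γ) → ℝ := Set.indicator {u | u x = A ∧ u y = B} (fun _ => 1) with hFdef
  have hsetmeas : MeasurableSet {u : X → Finset Γ | u x = A ∧ u y = B} := by
    have : {u : X → Finset Γ | u x = A ∧ u y = B}
        = (fun u : X → Finset Γ => u x) ⁻¹' {A} ∩ (fun u : X → Finset Γ => u y) ⁻¹' {B} := by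
      ext u; simp [Set.mem_setOf_eq]
    rw [this]
    exact ((measurable_pi_apply x) (loopMS_all _)).inter
      ((measurable_pi_apply y) (loopMS_all _))
  have hFmeas : Measurable F := measurable_const.indicator hsetmeas
  have hind : IndepFun (fun ω => F (fun x' => S x' ω)) (fun ω => g (fun γ => s γ ω)) μ :=
    hSsindep.comp hFmeas hgm
  have hFind : ∀ ω, F (fun x' => S x' ω) = E.indicator (fun _ => (1:ℝ)) ω := by
    intro ω
    by_cases h : ω ∈ E
    · rw [Set.indicator_of_mem h]
      exact Set.indicator_of_mem (by exact h) _
    · rw [Set.indicator_of_notMem h]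
      exact Set.indicator_of_notMem (by exact h) _
  have hFint : Integrable (fun ω => F (fun x' => S x' ω)) μ := by
    refine integrable_of_ae_bound ?_ (C := 1) ?_
    · exact (hFmeas.comp (measurable_pi_lambda _ fun x' => hSmeas x')).aestronglyMeasurable
    · refine Filter.Eventually.of_forall fun ω => ?_
      rw [hFind ω]
      by_cases h : ω ∈ E
      · rw [Set.indicator_of_mem h]; norm_num
      · rw [Set.indicator_of_notMem h]; norm_num
  have key : ∀ ω, F (fun x' => S x' ω) * g (fun γ => s γ ω)
      = E.indicator (fun ω => g (fun γ => s γ ω)) ω := by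
    intro ω
    rw [hFind ω]
    by_cases h : ω ∈ E
    · rw [Set.indicator_of_mem h, Set.indicator_of_mem h]; ring
    · rw [Set.indicator_of_notMem h, Set.indicator_of_notMem h]; ring
  calc ∫ ω in E, g (fun γ => s γ ω) ∂μ
      = ∫ ω, E.indicator (fun ω => g (fun γ => s γ ω)) ω ∂μ := (integral_indicator hEmeas).symm
    _ = ∫ ω, F (fun x' => S x' ω) * g (fun γ => s γ ω) ∂μ := by
        refine integral_congr_ae (Filter.Eventually.of_forall fun ω => ?_)
        exact (key ω).symm
    _ = (∫ ω, F (fun x' => S x' ω) ∂μ) * ∫ ω, g (fun γ => s γ ω) ∂μ :=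
        hind.integral_mul_eq_mul_integral hFint.1 hgint.1
    _ = (μ E).toReal * ∫ ω, g (fun γ => s γ ω) ∂μ := by
        congr 1
        have : (fun ω => F (fun x' => S x' ω)) = E.indicator (fun _ => (1:ℝ)) := funext hFind
        rw [this, integral_indicator_const _ hEmeas]
        simp [measureReal_def]
end Piece

/-- In the loop-sign model, with `ψ(x) = h(x)² − E[h(x)²]` (the normal-ordered
square of the height) and `φ(x) = N(x) − E[N(x)]` (the nesting field), and assuming
`E[N(x)²] < ∞`, `E[N(y)²] < ∞`, one has
`E[ψ(x)ψ(y)] = E[φ(x)φ(y)] + E[2 N(x,y)² − 2 N(x,y)]`. -/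
theorem loopSign_psi_phi_covariance
    {Ω : Type*} [MeasurableSpace Ω] (μ : Measure Ω) [IsProbabilityMeasure μ]
    {Γ : Type*} [Countable Γ] [DecidableEq Γ] {X : Type*}
    (S : X → Ω → Finset Γ) (s : Γ → Ω → ℝ)
    (hSmeas : ∀ x : X, Measurable (S x))
    (hsmeas : ∀ γ : Γ, Measurable (s γ))
    (hsign : ∀ γ : Γ, μ {ω | s γ ω = 1} = 1/2 ∧ μ {ω | s γ ω = -1} = 1/2)
    (hsindep : iIndepFun (m := fun _ : Γ => (inferInstance : MeasurableSpace ℝ)) s μ)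
    (hSsindep : IndepFun (fun ω (x : X) => S x ω) (fun ω (γ : Γ) => s γ ω) μ)
    (x y : X)
    (hx : Integrable (fun ω => ((S x ω).card : ℝ) ^ 2) μ)
    (hy : Integrable (fun ω => ((S y ω).card : ℝ) ^ 2) μ)
    -- the centered fields:
    (ψx ψy φx φy : Ω → ℝ)
    (hψx : ψx = fun ω => (∑ γ ∈ S x ω, s γ ω) ^ 2 - ∫ ω', (∑ γ ∈ S x ω', s γ ω') ^ 2 ∂μ)
    (hψy : ψy = fun ω => (∑ γ ∈ S y ω, s γ ω) ^ 2 - ∫ ω', (∑ γ ∈ S y ω', s γ ω') ^ 2 ∂μ)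
    (hφx : φx = fun ω => ((S x ω).card : ℝ) - ∫ ω', ((S x ω').card : ℝ) ∂μ)
    (hφy : φy = fun ω => ((S y ω).card : ℝ) - ∫ ω', ((S y ω').card : ℝ) ∂μ) :
    ∫ ω, ψx ω * ψy ω ∂μ
      = ∫ ω, φx ω * φy ω ∂μ
        + ∫ ω, (2 * ((S x ω ∩ S y ω).card : ℝ) ^ 2 - 2 * ((S x ω ∩ S y ω).card : ℝ)) ∂μ := by
  subst hψx hψy hφx hφy
  -- basic sign facts
  have hsae : ∀ᵐ ω ∂μ, ∀ γ : Γ, s γ ω = 1 ∨ s γ ω = -1 := signs_ae hsmeas hsign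
  have hsign0 : ∀ γ : Γ, ∫ ω, s γ ω ∂μ = 0 := integral_sign hsmeas hsign
  -- notation
  set Nx : Ω → ℝ := fun ω => ((S x ω).card : ℝ) with hNxdef
  set Ny : Ω → ℝ := fun ω => ((S y ω).card : ℝ) with hNydef
  set Nxy : Ω → ℝ := fun ω => ((S x ω ∩ S y ω).card : ℝ) with hNxydef
  set hX : Ω → ℝ := fun ω => ∑ γ ∈ S x ω, s γ ω with hhXdef
  set hY : Ω → ℝ := fun ω => ∑ γ ∈ S y ω, s γ ω with hhYdef
  -- measurability
  have hmNx : Measurable Nx := fun t _ =>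
    (hSmeas x) (loopMS_all
      ((fun A : Finset Γ => ((A.card : ℝ))) ⁻¹' t))
  have hmNy : Measurable Ny := fun t _ =>
    (hSmeas y) (loopMS_all
      ((fun A : Finset Γ => ((A.card : ℝ))) ⁻¹' t))
  have hmNxy : Measurable Nxy := by
    have hT : Measurable (fun ω => (S x ω, S y ω)) := (hSmeas x).prodMk (hSmeas y)
    have hF : Measurable (fun p : Finset Γ × Finset Γ => ((p.1 ∩ p.2).card : ℝ)) :=
      measurable_of_countable _
    exact fun t ht => hT (hF ht)
  have hmhX : Measurable hX := by
    refine measurable_comp_countable' (T := S x) (F := fun A ω' => ∑ γ ∈ A, s γ ω')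
      (fun A => (hSmeas x) ?_) (fun A => ?_)
    · exact (loopMS_all _)
    · exact Finset.measurable_sum A fun γ _ => hsmeas γ
  have hmhY : Measurable hY := by
    refine measurable_comp_countable' (T := S y) (F := fun A ω' => ∑ γ ∈ A, s γ ω')
      (fun A => (hSmeas y) ?_) (fun A => ?_)
    · exact (loopMS_all _)
    · exact Finset.measurable_sum A fun γ _ => hsmeas γ
  -- integrability of the card functions
  have intNx : Integrable Nx μ := by
    refine Integrable.mono' (hx.add (integrable_const 1)) hmNx.aestronglyMeasurable ?_
    refine Filter.Eventually.of_forall fun ω => ?_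
    simp only [Pi.add_apply]
    have h0 : (0:ℝ) ≤ Nx ω := by positivity
    rw [Real.norm_eq_abs, abs_of_nonneg h0]
    nlinarith [sq_nonneg (Nx ω - 1)]
  have intNy : Integrable Ny μ := by
    refine Integrable.mono' (hy.add (integrable_const 1)) hmNy.aestronglyMeasurable ?_
    refine Filter.Eventually.of_forall fun ω => ?_
    simp only [Pi.add_apply]
    have h0 : (0:ℝ) ≤ Ny ω := by positivity
    rw [Real.norm_eq_abs, abs_of_nonneg h0]
    nlinarith [sq_nonneg (Ny ω - 1)]
  have intNxNy : Integrable (fun ω => Nx ω * Ny ω) μ := by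
    refine Integrable.mono' (hx.add hy) (hmNx.mul hmNy).aestronglyMeasurable ?_
    refine Filter.Eventually.of_forall fun ω => ?_
    simp only [Pi.add_apply]
    have h0x : (0:ℝ) ≤ Nx ω := by positivity
    have h0y : (0:ℝ) ≤ Ny ω := by positivity
    rw [Real.norm_eq_abs, abs_of_nonneg (mul_nonneg h0x h0y)]
    nlinarith [sq_nonneg (Nx ω - Ny ω)]
  have hxy_le : ∀ ω, Nxy ω ≤ Nx ω := fun ω => by
    exact_mod_cast Nat.cast_le.mpr (Finset.card_le_card (Finset.inter_subset_left))
  have hxy0 : ∀ ω, (0:ℝ) ≤ Nxy ω := fun ω => by positivity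
  have intNxy : Integrable Nxy μ := by
    refine Integrable.mono' intNx hmNxy.aestronglyMeasurable ?_
    refine Filter.Eventually.of_forall fun ω => ?_
    rw [Real.norm_eq_abs, abs_of_nonneg (hxy0 ω)]
    exact hxy_le ω
  have intNxy2 : Integrable (fun ω => Nxy ω ^ 2) μ := by
    refine Integrable.mono' hx (hmNxy.pow_const 2).aestronglyMeasurable ?_
    refine Filter.Eventually.of_forall fun ω => ?_
    rw [Real.norm_eq_abs, abs_of_nonneg (sq_nonneg _)]
    exact pow_le_pow_left₀ (hxy0 ω) (hxy_le ω) 2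
  have intK : Integrable (fun ω => 2 * Nxy ω ^ 2 - 2 * Nxy ω) μ :=
    (intNxy2.const_mul 2).sub (intNxy.const_mul 2)
  -- the partition map
  set T : Ω → Finset Γ × Finset Γ := fun ω => (S x ω, S y ω) with hTdef
  have hTset : ∀ v : Finset Γ × Finset Γ, T ⁻¹' {v} = {ω | S x ω = v.1 ∧ S y ω = v.2} := by
    intro v; ext ω
    simp [hTdef, Prod.ext_iff, Set.mem_setOf_eq]
  have hTmeas : ∀ v : Finset Γ × Finset Γ, MeasurableSet (T ⁻¹' {v}) := by
    intro v
    rw [hTset v, show {ω | S x ω = v.1 ∧ S y ω = v.2}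
      = (S x) ⁻¹' {v.1} ∩ (S y) ⁻¹' {v.2} from by ext ω; simp [Set.mem_setOf_eq]]
    exact ((hSmeas x) (loopMS_all _)).inter
      ((hSmeas y) (loopMS_all _))
  -- fixed-sign-function integrability helper
  have hsumint : ∀ (A B : Finset Γ), Integrable
      (fun ω => (∑ γ ∈ A, s γ ω) ^ 2 * (∑ γ ∈ B, s γ ω) ^ 2) μ := by
    intro A B
    refine integrable_of_ae_bound
      (((Finset.measurable_sum A fun γ _ => hsmeas γ).pow_const 2).mul
        ((Finset.measurable_sum B fun γ _ => hsmeas γ).pow_const 2)).aestronglyMeasurable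
      (C := (A.card : ℝ)^2 * (B.card : ℝ)^2) ?_
    filter_upwards [hsae] with ω h
    have hA : |∑ γ ∈ A, s γ ω| ≤ (A.card : ℝ) := by
      refine (Finset.abs_sum_le_sum_abs _ _).trans ?_
      have : ∀ γ ∈ A, |s γ ω| ≤ 1 := by
        intro γ _; rcases h γ with h1|h1 <;> rw [h1] <;> norm_num
      calc ∑ γ ∈ A, |s γ ω| ≤ ∑ _γ ∈ A, (1:ℝ) := Finset.sum_le_sum this
        _ = (A.card : ℝ) := by simp
    have hB : |∑ γ ∈ B, s γ ω| ≤ (B.card : ℝ) := by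
      refine (Finset.abs_sum_le_sum_abs _ _).trans ?_
      have : ∀ γ ∈ B, |s γ ω| ≤ 1 := by
        intro γ _; rcases h γ with h1|h1 <;> rw [h1] <;> norm_num
      calc ∑ γ ∈ B, |s γ ω| ≤ ∑ _γ ∈ B, (1:ℝ) := Finset.sum_le_sum this
        _ = (B.card : ℝ) := by simp
    rw [abs_mul, abs_pow, abs_pow]
    have h0A := abs_nonneg (∑ γ ∈ A, s γ ω)
    have h0B := abs_nonneg (∑ γ ∈ B, s γ ω)
    exact mul_le_mul (pow_le_pow_left₀ h0A hA 2) (pow_le_pow_left₀ h0B hB 2)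
      (by positivity) (by positivity)
  have hsumint1 : ∀ (A : Finset Γ), Integrable (fun ω => (∑ γ ∈ A, s γ ω) ^ 2) μ := by
    intro A
    refine integrable_of_ae_bound
      ((Finset.measurable_sum A fun γ _ => hsmeas γ).pow_const 2).aestronglyMeasurable
      (C := (A.card : ℝ)^2) ?_
    filter_upwards [hsae] with ω h
    have hA : |∑ γ ∈ A, s γ ω| ≤ (A.card : ℝ) := by
      refine (Finset.abs_sum_le_sum_abs _ _).trans ?_
      have : ∀ γ ∈ A, |s γ ω| ≤ 1 := by
        intro γ _; rcases h γ with h1|h1 <;> rw [h1] <;> norm_num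
      calc ∑ γ ∈ A, |s γ ω| ≤ ∑ _γ ∈ A, (1:ℝ) := Finset.sum_le_sum this
        _ = (A.card : ℝ) := by simp
    rw [abs_pow]
    exact pow_le_pow_left₀ (abs_nonneg _) hA 2
  -- measurability of g for piece_eval
  have hgm1 : ∀ A : Finset Γ, Measurable (fun u : Γ → ℝ => (∑ γ ∈ A, u γ) ^ 2) :=
    fun A => (Finset.measurable_sum A fun γ _ => measurable_pi_apply γ).pow_const 2
  have hgm2 : ∀ A B : Finset Γ,
      Measurable (fun u : Γ → ℝ => (∑ γ ∈ A, u γ) ^ 2 * (∑ γ ∈ B, u γ) ^ 2) :=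
    fun A B => (hgm1 A).mul (hgm1 B)
  -- Step 1x
  have hpiece1x : ∀ v : Finset Γ × Finset Γ, IntegrableOn (fun ω => hX ω ^ 2) (T ⁻¹' {v}) μ ∧
      ∫ ω in T ⁻¹' {v}, hX ω ^ 2 ∂μ = ((v.1.card : ℝ)) * (μ (T ⁻¹' {v})).toReal := by
    rintro ⟨A, B⟩
    have hsetEq : T ⁻¹' {(A, B)} = {ω | S x ω = A ∧ S y ω = B} := hTset (A, B)
    have hEm : MeasurableSet {ω | S x ω = A ∧ S y ω = B} := hsetEq ▸ hTmeas (A, B)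
    have hEqOn : Set.EqOn (fun ω => (∑ γ ∈ A, s γ ω) ^ 2) (fun ω => hX ω ^ 2)
        {ω | S x ω = A ∧ S y ω = B} := by
      intro ω hω
      simp only [hhXdef]
      rw [hω.1]
    constructor
    · rw [hsetEq]
      exact ((hsumint1 A).integrableOn).congr_fun hEqOn hEm
    · rw [hsetEq, show (∫ ω in {ω | S x ω = A ∧ S y ω = B}, hX ω ^ 2 ∂μ)
          = ∫ ω in {ω | S x ω = A ∧ S y ω = B}, (∑ γ ∈ A, s γ ω) ^ 2 ∂μ
        from (setIntegral_congr_fun hEm hEqOn).symm]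
      rw [piece_eval hSmeas hSsindep x y A B (fun u => (∑ γ ∈ A, u γ) ^ 2)
        (hgm1 A) (hsumint1 A)]
      rw [integral_sq_fixed hsmeas hsae hsign0 hsindep A]
      ring
  have step1x := partition_integral' hTmeas ((hmhX.pow_const 2).aestronglyMeasurable)
      (Filter.Eventually.of_forall fun ω => sq_nonneg _)
      (g := fun v : Finset Γ × Finset Γ => ((v.1.card : ℝ)))
      (fun v => by positivity) intNx hpiece1x
  obtain ⟨int_hX2, hEx⟩ := step1x
  have hEx' : ∫ ω, hX ω ^ 2 ∂μ = ∫ ω, Nx ω ∂μ := hEx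
  -- Step 1y
  have hpiece1y : ∀ v : Finset Γ × Finset Γ, IntegrableOn (fun ω => hY ω ^ 2) (T ⁻¹' {v}) μ ∧
      ∫ ω in T ⁻¹' {v}, hY ω ^ 2 ∂μ = ((v.2.card : ℝ)) * (μ (T ⁻¹' {v})).toReal := by
    rintro ⟨A, B⟩
    have hsetEq : T ⁻¹' {(A, B)} = {ω | S x ω = A ∧ S y ω = B} := hTset (A, B)
    have hEm : MeasurableSet {ω | S x ω = A ∧ S y ω = B} := hsetEq ▸ hTmeas (A, B)
    have hEqOn : Set.EqOn (fun ω => (∑ γ ∈ B, s γ ω) ^ 2) (fun ω => hY ω ^ 2)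
        {ω | S x ω = A ∧ S y ω = B} := by
      intro ω hω
      simp only [hhYdef]
      rw [hω.2]
    constructor
    · rw [hsetEq]
      exact ((hsumint1 B).integrableOn).congr_fun hEqOn hEm
    · rw [hsetEq, show (∫ ω in {ω | S x ω = A ∧ S y ω = B}, hY ω ^ 2 ∂μ)
          = ∫ ω in {ω | S x ω = A ∧ S y ω = B}, (∑ γ ∈ B, s γ ω) ^ 2 ∂μ
        from (setIntegral_congr_fun hEm hEqOn).symm]
      rw [piece_eval hSmeas hSsindep x y A B (fun u => (∑ γ ∈ B, u γ) ^ 2)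
        (hgm1 B) (hsumint1 B)]
      rw [integral_sq_fixed hsmeas hsae hsign0 hsindep B]
      ring
  have step1y := partition_integral' hTmeas ((hmhY.pow_const 2).aestronglyMeasurable)
      (Filter.Eventually.of_forall fun ω => sq_nonneg _)
      (g := fun v : Finset Γ × Finset Γ => ((v.2.card : ℝ)))
      (fun v => by positivity) intNy hpiece1y
  obtain ⟨int_hY2, hEy⟩ := step1y
  have hEy' : ∫ ω, hY ω ^ 2 ∂μ = ∫ ω, Ny ω ∂μ := hEy
  -- Step 2 : the product
  set g2 : Finset Γ × Finset Γ → ℝ := fun v => (v.1.card : ℝ) * (v.2.card : ℝ)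
      + 2 * ((v.1 ∩ v.2).card : ℝ) ^ 2 - 2 * ((v.1 ∩ v.2).card : ℝ) with hg2def
  have hg2_0 : ∀ v, 0 ≤ g2 v := by
    intro v
    simp only [hg2def]
    have h2 : (0:ℝ) ≤ (v.1.card : ℝ) * (v.2.card : ℝ) := by positivity
    have h1 : ((v.1 ∩ v.2).card : ℝ) ≤ ((v.1 ∩ v.2).card : ℝ) ^ 2 := by
      by_cases hc : (v.1 ∩ v.2).card = 0
      · simp [hc]
      · have : (1:ℝ) ≤ ((v.1 ∩ v.2).card : ℝ) := by
          exact_mod_cast Nat.one_le_iff_ne_zero.mpr hc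
        nlinarith
    nlinarith
  have hg2int : Integrable (fun ω => g2 (T ω)) μ :=
    (intNxNy.add (intNxy2.const_mul 2)).sub (intNxy.const_mul 2)
  have hpiece2 : ∀ v : Finset Γ × Finset Γ,
      IntegrableOn (fun ω => hX ω ^ 2 * hY ω ^ 2) (T ⁻¹' {v}) μ ∧
      ∫ ω in T ⁻¹' {v}, hX ω ^ 2 * hY ω ^ 2 ∂μ = g2 v * (μ (T ⁻¹' {v})).toReal := by
    rintro ⟨A, B⟩
    have hsetEq : T ⁻¹' {(A, B)} = {ω | S x ω = A ∧ S y ω = B} := hTset (A, B)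
    have hEm : MeasurableSet {ω | S x ω = A ∧ S y ω = B} := hsetEq ▸ hTmeas (A, B)
    have hEqOn : Set.EqOn (fun ω => (∑ γ ∈ A, s γ ω) ^ 2 * (∑ γ ∈ B, s γ ω) ^ 2)
        (fun ω => hX ω ^ 2 * hY ω ^ 2) {ω | S x ω = A ∧ S y ω = B} := by
      intro ω hω
      simp only [hhXdef, hhYdef]
      rw [hω.1, hω.2]
    constructor
    · rw [hsetEq]
      exact ((hsumint A B).integrableOn).congr_fun hEqOn hEm
    · rw [hsetEq, show (∫ ω in {ω | S x ω = A ∧ S y ω = B}, hX ω ^ 2 * hY ω ^ 2 ∂μ)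
          = ∫ ω in {ω | S x ω = A ∧ S y ω = B},
              (∑ γ ∈ A, s γ ω) ^ 2 * (∑ γ ∈ B, s γ ω) ^ 2 ∂μ
        from (setIntegral_congr_fun hEm hEqOn).symm]
      rw [piece_eval hSmeas hSsindep x y A B
        (fun u => (∑ γ ∈ A, u γ) ^ 2 * (∑ γ ∈ B, u γ) ^ 2) (hgm2 A B) (hsumint A B)]
      rw [integral_sq_mul_sq_fixed hsmeas hsae hsign0 hsindep A B]
      simp only [hg2def]
      ring
  have step2 := partition_integral' (f := fun ω => hX ω ^ 2 * hY ω ^ 2) hTmeas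
      (((hmhX.pow_const 2).mul (hmhY.pow_const 2)).aestronglyMeasurable)
      (Filter.Eventually.of_forall fun ω => mul_nonneg (sq_nonneg _) (sq_nonneg _))
      (g := g2) hg2_0 hg2int hpiece2
  obtain ⟨int_f2, hEf2⟩ := step2
  have hsplit : ∫ ω, g2 (T ω) ∂μ
      = ∫ ω, Nx ω * Ny ω ∂μ + ∫ ω, (2 * Nxy ω ^ 2 - 2 * Nxy ω) ∂μ := by
    rw [show (fun ω => g2 (T ω))
        = fun ω => Nx ω * Ny ω + (2 * Nxy ω ^ 2 - 2 * Nxy ω) from by funext ω; simp only [hg2def]; ring]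
    exact integral_add intNxNy intK
  -- final algebra
  set cx : ℝ := ∫ ω', hX ω' ^ 2 ∂μ with hcx
  set cy : ℝ := ∫ ω', hY ω' ^ 2 ∂μ with hcy
  set mx : ℝ := ∫ ω', Nx ω' ∂μ with hmx
  set my : ℝ := ∫ ω', Ny ω' ∂μ with hmy
  have lhs_eq : ∫ ω, (hX ω ^ 2 - cx) * (hY ω ^ 2 - cy) ∂μ
      = ∫ ω, hX ω ^ 2 * hY ω ^ 2 ∂μ - cx * cy := by
    have e : (fun ω => (hX ω ^ 2 - cx) * (hY ω ^ 2 - cy))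
        = fun ω => (hX ω ^ 2 * hY ω ^ 2 - cx * hY ω ^ 2) - (cy * hX ω ^ 2 - cx * cy) := by
      funext ω; ring
    have hf1 : Integrable (fun ω => hX ω ^ 2 * hY ω ^ 2 - cx * hY ω ^ 2) μ :=
      int_f2.sub (int_hY2.const_mul cx)
    have hf2 : Integrable (fun ω => cy * hX ω ^ 2 - cx * cy) μ :=
      (int_hX2.const_mul cy).sub (integrable_const _)
    rw [e, integral_sub hf1 hf2,
      integral_sub int_f2 (int_hY2.const_mul cx),
      integral_sub (int_hX2.const_mul cy) (integrable_const _),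
      integral_const_mul, integral_const_mul, integral_const]
    simp only [measure_univ, ENNReal.toReal_one, probReal_univ, smul_eq_mul, one_mul]
    rw [← hcx, ← hcy]
    ring
  have rhs_eq : ∫ ω, (Nx ω - mx) * (Ny ω - my) ∂μ
      = ∫ ω, Nx ω * Ny ω ∂μ - mx * my := by
    have e : (fun ω => (Nx ω - mx) * (Ny ω - my))
        = fun ω => (Nx ω * Ny ω - mx * Ny ω) - (my * Nx ω - mx * my) := by
      funext ω; ring
    have hf1 : Integrable (fun ω => Nx ω * Ny ω - mx * Ny ω) μ :=
      intNxNy.sub (intNy.const_mul mx)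
    have hf2 : Integrable (fun ω => my * Nx ω - mx * my) μ :=
      (intNx.const_mul my).sub (integrable_const _)
    rw [e, integral_sub hf1 hf2,
      integral_sub intNxNy (intNy.const_mul mx),
      integral_sub (intNx.const_mul my) (integrable_const _),
      integral_const_mul, integral_const_mul, integral_const]
    simp only [measure_univ, ENNReal.toReal_one, probReal_univ, smul_eq_mul, one_mul]
    rw [← hmx, ← hmy]
    ring
  rw [lhs_eq, rhs_eq, hEf2, hsplit]
  have h1 : cx = mx := hEx'
  have h2 : cy = my := hEy'
  rw [h1, h2]
  ring
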